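/- arXiv:2207.04413 — 3 statements merged into one kernel-verified Lean document; each statement's English description precedes it below -/
import Mathlib

section
/- Let σ_x ≠ σ_y both positive, q_0 a non-degenerate normalized BC(S) for n bodies with masses m, and q_{0,n+1} a non-degenerate critical point of V_{Sn}(m, q_0, ·) (i.e. the 2×2 Hessian D²_{q_{n+1}} V_{Sn}(m, q_0, q_{0,n+1}) is invertible). Then there exists an open neighborhood U of 0 in ℝ and a continuous (indeed real analytic) map g : U → ℝ^{2n} × ℝ² with g(0) = (q_0, q_{0,n+1}) such that f_i^{(n+1)}(m, m_{n+1}, g(m_{n+1})) = 0 for all i = 1,...,n+1 and all m_{n+1} ∈ U, with λ = U_n(m, q_0) held fixed. In other words, the configuration (q_0, q_{0,n+1}) with zero (n+1)-th mass can be analytically continued to relative equilibrium configurations of the (n+1)-body problem for all sufficiently small m_{n+1}. -/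
open scoped BigOperators RealInnerProductSpace
open Matrix Filter

noncomputable section

/-- The plane. -/
abbrev E2 : Type := EuclideanSpace ℝ (Fin 2)

/-- Action of a `2×2` matrix on a vector of the plane. -/
noncomputable def mvec (S : Matrix (Fin 2) (Fin 2) ℝ) (x : E2) : E2 :=
  (EuclideanSpace.equiv (Fin 2) ℝ).symm (S.mulVec (EuclideanSpace.equiv (Fin 2) ℝ x))

/-- The Newtonian force function `U_n`. -/
noncomputable def newtU {n : ℕ} (m : Fin n → ℝ) (q : Fin n → E2) : ℝ :=
  ∑ i : Fin n, ∑ j : Fin n, if i < j then m i * m j / ‖q j - q i‖ else 0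

/-- The gradient `∇_i U_n`. -/
noncomputable def gradU {n : ℕ} (m : Fin n → ℝ) (q : Fin n → E2) (i : Fin n) : E2 :=
  ∑ j ∈ Finset.univ.erase i, (m i * m j / ‖q j - q i‖ ^ 3) • (q j - q i)

/-- The center of mass. -/
noncomputable def com {n : ℕ} (m : Fin n → ℝ) (q : Fin n → E2) : E2 :=
  (∑ i, m i)⁻¹ • ∑ i, m i • q i

/-- Collision-free configurations, i.e. `q ∈ ℝ^{2n} \ Δ`. -/
def CollisionFree {n : ℕ} (q : Fin n → E2) : Prop := ∀ i j, i ≠ j → q i ≠ q j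

/-- Balanced configuration with respect to `S`, with parameter `lam`. -/
def IsBC {n : ℕ} (m : Fin n → ℝ) (q : Fin n → E2)
    (S : Matrix (Fin 2) (Fin 2) ℝ) (lam : ℝ) : Prop :=
  ∀ i, gradU m q i + (m i * lam) • mvec S (q i - com m q) = 0

/-- The `S`-weighted moment of inertia `I_S`. -/
noncomputable def momI {n : ℕ} (m : Fin n → ℝ) (q : Fin n → E2)
    (S : Matrix (Fin 2) (Fin 2) ℝ) : ℝ :=
  ∑ j, m j * ⟪q j - com m q, mvec S (q j - com m q)⟫

/-- The diagonal matrix `diag(σx, σy)`. -/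
def Sdiag (sx sy : ℝ) : Matrix (Fin 2) (Fin 2) ℝ := !![sx, 0; 0, sy]

/-- Relative equilibrium map `f_i^{(n)}(m,q)` for normalized configurations. -/
noncomputable def relEq {n : ℕ} (m : Fin n → ℝ) (q : Fin n → E2)
    (S : Matrix (Fin 2) (Fin 2) ℝ) (i : Fin n) : E2 :=
  (∑ j ∈ Finset.univ.erase i, (m j / ‖q j - q i‖ ^ 3) • (q j - q i)) + newtU m q • mvec S (q i)

/-- The `n`-body relative equilibrium map with the multiplier `lam` held fixed. -/
noncomputable def nBodyMap {n : ℕ} (m : Fin n → ℝ) (S : Matrix (Fin 2) (Fin 2) ℝ) (lam : ℝ)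
    (q : Fin n → E2) (i : Fin n) : E2 :=
  (∑ j ∈ Finset.univ.erase i, (m j / ‖q j - q i‖ ^ 3) • (q j - q i)) + lam • mvec S (q i)

/-- The gradient `∇_ξ V_{Sn}` of the restricted potential, with coefficient `lam`. -/
noncomputable def gradV {n : ℕ} (m : Fin n → ℝ) (S : Matrix (Fin 2) (Fin 2) ℝ) (lam : ℝ)
    (q : Fin n → E2) (ξ : E2) : E2 :=
  (∑ j, (m j / ‖q j - ξ‖ ^ 3) • (q j - ξ)) + lam • mvec S ξ

/-- The restricted potential `V_{Sn}(m, q, ξ)`. -/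
noncomputable def Vres {n : ℕ} (m : Fin n → ℝ) (q : Fin n → E2)
    (S : Matrix (Fin 2) (Fin 2) ℝ) (ξ : E2) : ℝ :=
  (∑ j, m j / ‖q j - ξ‖) + (1 / 2) * newtU m q * ⟪ξ, mvec S ξ⟫

/-- The combined `(n+1)`-body map `(f_1^{(n+1)},…,f_{n+1}^{(n+1)})` with `lam` fixed
and `ε` the small `(n+1)`-th mass. -/
noncomputable def fullMap {n : ℕ} (m : Fin n → ℝ) (S : Matrix (Fin 2) (Fin 2) ℝ) (lam : ℝ)
    (ε : ℝ) (q : Fin n → E2) (ξ : E2) : (Fin n → E2) × E2 :=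
  (fun i => (ε / ‖ξ - q i‖ ^ 3) • (ξ - q i) + nBodyMap m S lam q i, gradV m S lam q ξ)

/-- Map whose derivative at `q̃` is the Hessian-type matrix `H(q̃) = D²U_n(q̃) + λ Ŝ M`
(central-configuration case `S = σ I`). -/
noncomputable def hessMap {n : ℕ} (m : Fin n → ℝ) (sg lam : ℝ) (q : Fin n → E2)
    (i : Fin n) : E2 :=
  gradU m q i + (lam * sg * m i) • q i

/-- Rotation by `π/2` in the plane. -/
noncomputable def rotJ (x : E2) : E2 := mvec !![(0 : ℝ), -1; 1, 0] x
section AuxStmt10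

/-- `mvec S` as a continuous linear map. -/
noncomputable def mvecL (S : Matrix (Fin 2) (Fin 2) ℝ) : E2 →L[ℝ] E2 :=
  ((EuclideanSpace.equiv (Fin 2) ℝ).symm.toContinuousLinearMap).comp
    ((LinearMap.toContinuousLinearMap S.mulVecLin).comp
      (EuclideanSpace.equiv (Fin 2) ℝ).toContinuousLinearMap)

lemma mvecL_apply (S : Matrix (Fin 2) (Fin 2) ℝ) (x : E2) : mvecL S x = mvec S x := by
  simp [mvecL, mvec]

lemma contDiffAt_cube {F : Type*} [NormedAddCommGroup F] [NormedSpace ℝ F]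
    {f : F → ℝ} {g : F → E2} {x : F}
    (hf : ContDiffAt ℝ 1 f x) (hg : ContDiffAt ℝ 1 g x) (hne : g x ≠ 0) :
    ContDiffAt ℝ 1 (fun p => (f p / ‖g p‖ ^ 3) • g p) x := by
  have h1 : ContDiffAt ℝ 1 (fun p => ‖g p‖) x := hg.norm ℝ hne
  have h2 : ContDiffAt ℝ 1 (fun p => f p / ‖g p‖ ^ 3) x :=
    hf.div (h1.pow 3) (pow_ne_zero 3 (norm_ne_zero_iff.mpr hne))
  exact h2.smul hg

lemma contDiffAt_nBodyMap {n : ℕ} (m : Fin n → ℝ)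
    (S : Matrix (Fin 2) (Fin 2) ℝ) (lam : ℝ)
    {q0 : Fin n → E2} (hq0 : CollisionFree q0) (i : Fin n) :
    ContDiffAt ℝ 1 (fun q : Fin n → E2 => nBodyMap m S lam q i) q0 := by
  simp only [nBodyMap]
  apply ContDiffAt.add
  · apply ContDiffAt.sum
    intro j hj
    have hjne : j ≠ i := Finset.ne_of_mem_erase hj
    exact contDiffAt_cube contDiffAt_const
      (((ContinuousLinearMap.proj (R := ℝ) (φ := fun _ : Fin n => E2) j).contDiff.sub
        (ContinuousLinearMap.proj (R := ℝ) (φ := fun _ : Fin n => E2) i).contDiff).contDiffAt)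
      (sub_ne_zero.mpr (hq0 j i hjne))
  · have : (fun q : Fin n → E2 => lam • mvec S (q i)) =
        fun q : Fin n → E2 => lam • mvecL S (q i) := by
      funext q; rw [mvecL_apply]
    rw [this]
    exact ((contDiffAt_const (c := lam)).smul (((mvecL S).contDiff.comp
      (ContinuousLinearMap.proj (R := ℝ) (φ := fun _ : Fin n => E2) i).contDiff).contDiffAt))

lemma contDiffAt_gradV {n : ℕ} (m : Fin n → ℝ)
    (S : Matrix (Fin 2) (Fin 2) ℝ) (lam : ℝ)
    {q0 : Fin n → E2} {q01 : E2} (hsep : ∀ i, q01 ≠ q0 i) :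
    ContDiffAt ℝ 1 (fun p : (Fin n → E2) × E2 => gradV m S lam p.1 p.2) (q0, q01) := by
  simp only [gradV]
  apply ContDiffAt.add
  · apply ContDiffAt.sum
    intro j _
    exact contDiffAt_cube contDiffAt_const
      ((((ContinuousLinearMap.proj (R := ℝ) (φ := fun _ : Fin n => E2) j).contDiff.comp
        contDiff_fst).sub contDiff_snd).contDiffAt)
      (sub_ne_zero.mpr (Ne.symm (hsep j)))
  · have : (fun p : (Fin n → E2) × E2 => lam • mvec S p.2) =
        fun p : (Fin n → E2) × E2 => lam • mvecL S p.2 := by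
      funext p; rw [mvecL_apply]
    rw [this]
    exact ((contDiffAt_const (c := lam)).smul (((mvecL S).contDiff.comp
      (contDiff_snd : ContDiff ℝ 1 (Prod.snd : (Fin n → E2) × E2 → E2))).contDiffAt))

end AuxStmt10
set_option maxHeartbeats 1000000 in
/-- analytic continuation of a non-degenerate normalized balanced
configuration (σx ≠ σy) together with a non-degenerate critical point of the
restricted potential, to relative equilibria of the `(n+1)`-body problem for all
sufficiently small `(n+1)`-th masses. -/
theorem stmt10 {n : ℕ} (m : Fin n → ℝ) (hm : ∀ i, 0 < m i)
    (sx sy : ℝ) (hx : 0 < sx) (hy : 0 < sy) (hxy : sx ≠ sy)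
    (q0 : Fin n → E2) (hq0 : CollisionFree q0)
    (q01 : E2) (hsep : ∀ i, q01 ≠ q0 i)
    (lam : ℝ) (hlam : lam = newtU m q0)
    (hc : com m q0 = 0) (hI : momI m q0 (Sdiag sx sy) = 1)
    (h0 : ∀ i, nBodyMap m (Sdiag sx sy) lam q0 i = 0)
    (h1 : gradV m (Sdiag sx sy) lam q0 q01 = 0)
    (A : (Fin n → E2) →L[ℝ] (Fin n → E2))
    (hA : HasFDerivAt (fun q => nBodyMap m (Sdiag sx sy) lam q) A q0)
    (hAbij : Function.Bijective A)
    (B : E2 →L[ℝ] E2)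
    (hB : HasFDerivAt (fun ξ => gradV m (Sdiag sx sy) lam q0 ξ) B q01)
    (hBbij : Function.Bijective B) :
    ∃ U : Set ℝ, IsOpen U ∧ (0 : ℝ) ∈ U ∧
      ∃ g : ℝ → (Fin n → E2) × E2, ContinuousOn g U ∧ g 0 = (q0, q01) ∧
        ∀ ε ∈ U, fullMap m (Sdiag sx sy) lam ε (g ε).1 (g ε).2 = 0 := by
  classical
  set S := Sdiag sx sy with hS
  set a : ℝ × ((Fin n → E2) × E2) := (0, (q0, q01)) with ha
  set Φ : (ℝ × ((Fin n → E2) × E2)) → (ℝ × ((Fin n → E2) × E2)) :=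
    fun p => (p.1, fullMap m S lam p.1 p.2.1 p.2.2) with hΦdef
  -- smoothness of Φ at a
  have hΦ : ContDiffAt ℝ 1 Φ a := by
    rw [hΦdef]
    have h2snd : ContDiffAt ℝ 1
        (fun p : ℝ × ((Fin n → E2) × E2) => gradV m S lam p.2.1 p.2.2) a :=
      by have h := (contDiffAt_gradV m S lam hsep).comp a (f := Prod.snd) contDiffAt_snd; exact h
    have h1' : ContDiffAt ℝ 1 (fun p : ℝ × ((Fin n → E2) × E2) =>
        fun i => (p.1 / ‖p.2.2 - p.2.1 i‖ ^ 3) • (p.2.2 - p.2.1 i)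
          + nBodyMap m S lam p.2.1 i) a := by
      refine contDiffAt_pi.mpr fun i => ?_
      apply ContDiffAt.add
      · exact contDiffAt_cube contDiffAt_fst
          (((contDiff_snd.comp contDiff_snd).sub
            ((ContinuousLinearMap.proj (R := ℝ) (φ := fun _ : Fin n => E2) i).contDiff.comp
              (contDiff_fst.comp contDiff_snd))).contDiffAt)
          (sub_ne_zero.mpr (hsep i))
      · exact (contDiffAt_nBodyMap m S lam hq0 i).comp a (f := fun p : ℝ × ((Fin n → E2) × E2) => p.2.1) (contDiffAt_fst.comp a contDiffAt_snd)
    exact contDiffAt_fst.prodMk (h1'.prodMk h2snd)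
  have hDst : HasStrictFDerivAt Φ (fderiv ℝ Φ a) a := hΦ.hasStrictFDerivAt one_ne_zero
  set D := fderiv ℝ Φ a with hDdef
  -- value at a
  have hΦa : Φ a = 0 := by
    have hF0 : fullMap m S lam 0 q0 q01 = 0 := by
      simp only [fullMap, zero_div, zero_smul, zero_add]
      rw [show (fun i => nBodyMap m S lam q0 i) = (0 : Fin n → E2) from funext fun i => h0 i, h1]
      rfl
    show ((0:ℝ), fullMap m S lam 0 q0 q01) = 0
    rw [hF0]
    rfl
  -- partial derivative in q
  have hCd : DifferentiableAt ℝ (fun q : Fin n → E2 => gradV m S lam q q01) q0 := by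
    have hj := ((contDiffAt_gradV m S lam hsep).differentiableAt one_ne_zero)
    have hj2 : DifferentiableAt ℝ (fun q : Fin n → E2 => (q, q01)) q0 :=
      differentiableAt_id.prodMk (differentiableAt_const q01)
    have hj3 := DifferentiableAt.comp (𝕜 := ℝ) q0 hj hj2
    exact hj3
  set C := fderiv ℝ (fun q : Fin n → E2 => gradV m S lam q q01) q0 with hCdef
  have hC : HasFDerivAt (fun q : Fin n → E2 => gradV m S lam q q01) C q0 := hCd.hasFDerivAt
  have hι2 : HasFDerivAt (fun u : Fin n → E2 => ((0:ℝ), (u, q01)))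
      ((0 : (Fin n → E2) →L[ℝ] ℝ).prod
        ((ContinuousLinearMap.id ℝ (Fin n → E2)).prod 0)) q0 :=
    (hasFDerivAt_const _ _).prodMk ((hasFDerivAt_id _).prodMk (hasFDerivAt_const _ _))
  have hcomp2 := HasFDerivAt.comp (𝕜 := ℝ) q0 hDst.hasFDerivAt hι2
  have heq2 : (fun u : Fin n → E2 => Φ ((0:ℝ), (u, q01)))
      = fun u : Fin n → E2 => (((0:ℝ)), (nBodyMap m S lam u, gradV m S lam u q01)) := by
    funext u
    rw [hΦdef]
    simp only [fullMap, zero_div, zero_smul, zero_add]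
  have hψ2 : HasFDerivAt (fun u : Fin n → E2 => Φ ((0:ℝ), (u, q01)))
      ((0 : (Fin n → E2) →L[ℝ] ℝ).prod (A.prod C)) q0 := by
    rw [heq2]
    exact (hasFDerivAt_const _ _).prodMk (hA.prodMk hC)
  have hud2 := hcomp2.unique hψ2
  have hDu : ∀ u : Fin n → E2, D ((0:ℝ), (u, (0:E2))) = ((0:ℝ), (A u, C u)) := by
    intro u
    have h := DFunLike.congr_fun hud2 u
    simpa using h
  -- partial derivative in ξ
  have hι3 : HasFDerivAt (fun v : E2 => ((0:ℝ), (q0, v)))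
      ((0 : E2 →L[ℝ] ℝ).prod
        ((0 : E2 →L[ℝ] (Fin n → E2)).prod (ContinuousLinearMap.id ℝ E2))) q01 :=
    (hasFDerivAt_const _ _).prodMk ((hasFDerivAt_const _ _).prodMk (hasFDerivAt_id _))
  have hcomp3 := HasFDerivAt.comp (𝕜 := ℝ) q01 hDst.hasFDerivAt hι3
  have heq3 : (fun v : E2 => Φ ((0:ℝ), (q0, v)))
      = fun v : E2 => (((0:ℝ)), ((0 : Fin n → E2), gradV m S lam q0 v)) := by
    funext v
    rw [hΦdef]
    simp only [fullMap, zero_div, zero_smul, zero_add]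
    rw [show (fun i => nBodyMap m S lam q0 i) = (0 : Fin n → E2) from funext fun i => h0 i]
  have hψ3 : HasFDerivAt (fun v : E2 => Φ ((0:ℝ), (q0, v)))
      ((0 : E2 →L[ℝ] ℝ).prod ((0 : E2 →L[ℝ] (Fin n → E2)).prod B)) q01 := by
    rw [heq3]
    exact (hasFDerivAt_const _ _).prodMk ((hasFDerivAt_const _ _).prodMk hB)
  have hud3 := hcomp3.unique hψ3
  have hDv : ∀ v : E2, D ((0:ℝ), ((0 : Fin n → E2), v)) = ((0:ℝ), ((0 : Fin n → E2), B v)) := by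
    intro v
    have h := DFunLike.congr_fun hud3 v
    simpa using h
  -- first coordinate of D
  have hcomp1 := HasFDerivAt.comp (𝕜 := ℝ) a
    (hasFDerivAt_fst (p := Φ a) (𝕜 := ℝ)) hDst.hasFDerivAt
  have hfst' : HasFDerivAt (fun p : ℝ × ((Fin n → E2) × E2) => (Φ p).1)
      (ContinuousLinearMap.fst ℝ ℝ ((Fin n → E2) × E2)) a := by
    have hq : (fun p : ℝ × ((Fin n → E2) × E2) => (Φ p).1) = fun p => p.1 := by
      funext p; rw [hΦdef]
    rw [hq]
    exact hasFDerivAt_fst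
  have hud1 := hcomp1.unique hfst'
  have hD1 : ∀ x, (D x).1 = x.1 := by
    intro x
    have h := DFunLike.congr_fun hud1 x
    simpa using h
  -- decomposition of D
  have hDsum : ∀ (e : ℝ) (u : Fin n → E2) (v : E2),
      D (e, (u, v)) = D (e, ((0 : Fin n → E2), (0:E2)))
        + ((0:ℝ), (A u, C u)) + ((0:ℝ), ((0 : Fin n → E2), B v)) := by
    intro e u v
    rw [← hDu u, ← hDv v, ← map_add, ← map_add]
    congr 1
    simp [Prod.ext_iff]
  have hDzero : ∀ (e : ℝ) (u : Fin n → E2) (v : E2),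
      D (e, (u, v)) = 0 → e = 0 ∧ u = 0 ∧ v = 0 := by
    intro e u v h
    have he : e = 0 := by
      have h' := hD1 (e, (u, v))
      rw [h] at h'
      simpa using h'.symm
    subst he
    have hsum := hDsum 0 u v
    rw [show ((0:ℝ), ((0 : Fin n → E2), (0:E2))) = (0 : ℝ × ((Fin n → E2) × E2)) from rfl,
      map_zero, zero_add, h] at hsum
    have h21 : A u = 0 := by
      have hcc := congrArg (fun p : ℝ × ((Fin n → E2) × E2) => p.2.1) hsum
      simpa using hcc.symm
    have hu : u = 0 := hAbij.1 (by rw [h21, map_zero])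
    subst hu
    have h22 : B v = 0 := by
      have hcc := congrArg (fun p : ℝ × ((Fin n → E2) × E2) => p.2.2) hsum
      simpa using hcc.symm
    exact ⟨rfl, rfl, hBbij.1 (by rw [h22, map_zero])⟩
  have hinj : Function.Injective D := by
    intro x y hxy
    obtain ⟨e1, u1, v1⟩ := x
    obtain ⟨e2, u2, v2⟩ := y
    have hz : D (e1 - e2, (u1 - u2, v1 - v2)) = 0 := by
      rw [show ((e1 - e2, (u1 - u2, v1 - v2)) : ℝ × ((Fin n → E2) × E2))
        = (e1, (u1, v1)) - (e2, (u2, v2)) from rfl, map_sub, hxy, sub_self]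
    obtain ⟨he, hu, hv⟩ := hDzero _ _ _ hz
    simp only [Prod.mk.injEq]
    exact ⟨sub_eq_zero.mp he, sub_eq_zero.mp hu, sub_eq_zero.mp hv⟩
  have hsurj : Function.Surjective D := by
    intro y
    obtain ⟨b1, b2, b3⟩ := y
    set w := D (b1, ((0 : Fin n → E2), (0:E2))) with hw
    obtain ⟨u, hu⟩ := hAbij.2 (b2 - w.2.1)
    obtain ⟨v, hv⟩ := hBbij.2 (b3 - w.2.2 - C u)
    refine ⟨(b1, (u, v)), ?_⟩
    rw [hDsum b1 u v, ← hw]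
    have hw1 : w.1 = b1 := hD1 _
    rw [show w = (w.1, (w.2.1, w.2.2)) from rfl]
    simp only [Prod.mk_add_mk, Prod.mk.injEq]
    refine ⟨by rw [hw1]; ring, ?_, ?_⟩
    · rw [hu]; abel
    · rw [hv]; abel
  have hbij : Function.Bijective D := ⟨hinj, hsurj⟩
  -- upgrade D to a continuous linear equivalence
  let L : (ℝ × ((Fin n → E2) × E2)) ≃ₗ[ℝ] (ℝ × ((Fin n → E2) × E2)) :=
    LinearEquiv.ofBijective D.toLinearMap hbij
  let Leq : (ℝ × ((Fin n → E2) × E2)) ≃L[ℝ] (ℝ × ((Fin n → E2) × E2)) :=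
    L.toContinuousLinearEquiv
  have hstr : HasStrictFDerivAt Φ
      ((Leq : (ℝ × ((Fin n → E2) × E2)) →L[ℝ] (ℝ × ((Fin n → E2) × E2)))) a := by
    have hDL : ((Leq : (ℝ × ((Fin n → E2) × E2)) →L[ℝ] (ℝ × ((Fin n → E2) × E2)))) = D := by
      apply ContinuousLinearMap.ext
      intro x
      rfl
    rw [hDL]
    exact hDst
  -- inverse function theorem
  set H := hstr.toOpenPartialHomeomorph Φ with hH
  have hcoe : ⇑H = Φ := by rw [hH]; exact hstr.toOpenPartialHomeomorph_coe
  have hsrc : a ∈ H.source := hstr.mem_toOpenPartialHomeomorph_source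
  have htgt : Φ a ∈ H.target := hstr.image_mem_toOpenPartialHomeomorph_target
  refine ⟨(fun ε : ℝ => ((ε, (0 : (Fin n → E2) × E2)) : ℝ × ((Fin n → E2) × E2))) ⁻¹' H.target,
    H.open_target.preimage (continuous_id.prodMk continuous_const), ?_,
    fun ε => (H.symm ((ε, (0 : (Fin n → E2) × E2)))).2, ?_, ?_, ?_⟩
  · show ((0:ℝ), (0 : (Fin n → E2) × E2)) ∈ H.target
    rw [show (((0:ℝ), (0 : (Fin n → E2) × E2)) : ℝ × ((Fin n → E2) × E2)) = Φ a from hΦa.symm]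
    exact htgt
  · have hcont : ContinuousOn (fun ε : ℝ => H.symm ((ε, (0 : (Fin n → E2) × E2))))
        ((fun ε : ℝ => ((ε, (0 : (Fin n → E2) × E2)) : ℝ × ((Fin n → E2) × E2))) ⁻¹' H.target) :=
      H.continuousOn_symm.comp ((continuous_id.prodMk continuous_const).continuousOn)
        (fun ε hε => hε)
    exact continuous_snd.comp_continuousOn hcont
  · show (H.symm (((0:ℝ), (0 : (Fin n → E2) × E2)))).2 = (q0, q01)
    have h00 : (((0:ℝ), (0 : (Fin n → E2) × E2)) : ℝ × ((Fin n → E2) × E2)) = Φ a := hΦa.symm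
    rw [h00]
    have hleft : H.symm (Φ a) = a := by
      have hli := H.left_inv hsrc
      rwa [hcoe] at hli
    rw [hleft, ha]
  · intro ε hε
    have hmem : ((ε, (0 : (Fin n → E2) × E2)) : ℝ × ((Fin n → E2) × E2)) ∈ H.target := hε
    have hr : Φ (H.symm ((ε, (0 : (Fin n → E2) × E2)))) = (ε, (0 : (Fin n → E2) × E2)) := by
      have hri := H.right_inv hmem
      rwa [hcoe] at hri
    show fullMap m S lam ε (H.symm ((ε, (0 : (Fin n → E2) × E2)))).2.1
      (H.symm ((ε, (0 : (Fin n → E2) × E2)))).2.2 = 0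
    set p : ℝ × ((Fin n → E2) × E2) := H.symm ((ε, (0 : (Fin n → E2) × E2))) with hp
    have hp1 : p.1 = ε := congrArg Prod.fst hr
    have hp2 : fullMap m S lam p.1 p.2.1 p.2.2 = 0 := congrArg Prod.snd hr
    rw [hp1] at hp2
    exact hp2
end
end

section
/- If q̃ is a normalized central configuration (S = σ I with σ > 0), then the vector v ∈ ℝ^{2n} tangent to the rotation orbit, given by v_i = J q̃_i where J is the rotation by π/2, lies in the kernel of the matrix H(q̃) = D²U_n(q̃) + λ Ŝ M with λ = U_n(m, q̃); in particular H(q̃) has rank at most 2n − 1. -/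
open scoped BigOperators RealInnerProductSpace
open Matrix Filter

noncomputable section

section Aux

lemma mvec_apply' (S : Matrix (Fin 2) (Fin 2) ℝ) (x : E2) (k : Fin 2) :
    mvec S x k = S k 0 * x 0 + S k 1 * x 1 := by
  show S.mulVec (fun j => x j) k = _
  simp [Matrix.mulVec, dotProduct, Fin.sum_univ_two]

lemma mvec_add' (S : Matrix (Fin 2) (Fin 2) ℝ) (x y : E2) :
    mvec S (x + y) = mvec S x + mvec S y := by
  ext k; simp only [PiLp.add_apply, mvec_apply']; ring

lemma mvec_sub' (S : Matrix (Fin 2) (Fin 2) ℝ) (x y : E2) :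
    mvec S (x - y) = mvec S x - mvec S y := by
  ext k; simp only [PiLp.sub_apply, mvec_apply']; ring

lemma mvec_smul' (S : Matrix (Fin 2) (Fin 2) ℝ) (c : ℝ) (x : E2) :
    mvec S (c • x) = c • mvec S x := by
  ext k; simp only [PiLp.smul_apply, smul_eq_mul, mvec_apply']; ring

lemma mvec_zero' (S : Matrix (Fin 2) (Fin 2) ℝ) : mvec S 0 = 0 := by
  ext k; simp [mvec_apply']

lemma mvec_sum' {ι : Type*} (S : Matrix (Fin 2) (Fin 2) ℝ) (s : Finset ι) (f : ι → E2) :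
    mvec S (∑ j ∈ s, f j) = ∑ j ∈ s, mvec S (f j) := by
  classical
  induction s using Finset.induction_on with
  | empty => simp [mvec_zero']
  | insert _ _ h ih => rw [Finset.sum_insert h, Finset.sum_insert h, mvec_add', ih]

lemma mvec_sdiag (sg : ℝ) (x : E2) : mvec (Sdiag sg sg) x = sg • x := by
  ext k
  fin_cases k <;> simp [mvec_apply', Sdiag]

/-- Rotation matrix by angle θ. -/
noncomputable def Rmat (θ : ℝ) : Matrix (Fin 2) (Fin 2) ℝ :=
  !![Real.cos θ, -Real.sin θ; Real.sin θ, Real.cos θ]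

lemma mvec_Rmat_eq (θ : ℝ) (x : E2) :
    mvec (Rmat θ) x = Real.cos θ • x + Real.sin θ • rotJ x := by
  ext k
  fin_cases k <;>
    simp [mvec_apply', rotJ, Rmat] <;> ring

lemma mvec_Rmat_zero (x : E2) : mvec (Rmat 0) x = x := by
  rw [mvec_Rmat_eq]; simp

lemma norm_mvec_Rmat (θ : ℝ) (x : E2) : ‖mvec (Rmat θ) x‖ = ‖x‖ := by
  have h : ∀ y : E2, ‖y‖ = Real.sqrt (y 0 ^ 2 + y 1 ^ 2) := by
    intro y
    rw [EuclideanSpace.norm_eq]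
    simp [Fin.sum_univ_two, sq_abs]
  rw [h, h]
  congr 1
  simp [mvec_apply', Rmat]
  nlinarith [Real.sin_sq_add_cos_sq θ]

lemma rotJ_eq_zero_iff (x : E2) : rotJ x = 0 ↔ x = 0 := by
  constructor
  · intro h
    have h0 := congrArg (fun y : E2 => y 0) h
    have h1 := congrArg (fun y : E2 => y 1) h
    simp [rotJ, mvec_apply'] at h0 h1
    ext k
    fin_cases k <;> simp [h0, h1]
  · rintro rfl; ext k; simp [rotJ, mvec_apply']

lemma hessMap_equivariant {n : ℕ} (m : Fin n → ℝ) (sg lam : ℝ) (q : Fin n → E2)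
    (θ : ℝ) (i : Fin n) :
    hessMap m sg lam (fun j => mvec (Rmat θ) (q j)) i = mvec (Rmat θ) (hessMap m sg lam q i) := by
  unfold hessMap gradU
  rw [mvec_add', mvec_sum', mvec_smul']
  congr 1
  refine Finset.sum_congr rfl fun j hj => ?_
  rw [← mvec_sub', ← mvec_smul', norm_mvec_Rmat]

end Aux

/-- the rotational direction lies in the kernel of `H(q̃)`, so
`H(q̃)` has rank at most `2n − 1`. -/
theorem stmt12 {n : ℕ} (hn : 1 ≤ n) (m : Fin n → ℝ) (hm : ∀ i, 0 < m i)
    (sg : ℝ) (hsg : 0 < sg)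
    (q : Fin n → E2) (hq : CollisionFree q)
    (hc : com m q = 0) (hI : momI m q (Sdiag sg sg) = 1)
    (lam : ℝ) (hlam : lam = newtU m q)
    (hcc : IsBC m q (Sdiag sg sg) lam)
    (H : (Fin n → E2) →L[ℝ] (Fin n → E2))
    (hH : HasFDerivAt (fun p => hessMap m sg lam p) H q) :
    H (fun i => rotJ (q i)) = 0 ∧
      Module.finrank ℝ (LinearMap.range H.toLinearMap) ≤ 2 * n - 1 := by
  classical
  -- the configuration is a zero of `hessMap`
  have hzero : ∀ i, hessMap m sg lam q i = 0 := by
    intro i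
    have h := hcc i
    rw [hc] at h
    simp only [sub_zero, mvec_sdiag] at h
    unfold hessMap
    rw [← h]
    congr 1
    rw [smul_smul]
    ring_nf
  -- the curve of rotated configurations
  set v : Fin n → E2 := fun i => rotJ (q i) with hv
  have hg0 : (fun i => mvec (Rmat 0) (q i)) = q := by
    funext i; exact mvec_Rmat_zero (q i)
  have hgd : HasDerivAt (fun θ : ℝ => fun i => mvec (Rmat θ) (q i)) v 0 := by
    rw [hasDerivAt_pi]
    intro i
    have : HasDerivAt (fun θ : ℝ => Real.cos θ • q i + Real.sin θ • rotJ (q i))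
        ((-Real.sin 0) • q i + Real.cos 0 • rotJ (q i)) 0 :=
      ((Real.hasDerivAt_cos 0).smul_const (q i)).add
        ((Real.hasDerivAt_sin 0).smul_const (rotJ (q i)))
    simp only [Real.sin_zero, Real.cos_zero, neg_zero, zero_smul, one_smul, zero_add] at this
    exact this.congr_of_eventuallyEq
      (Filter.Eventually.of_forall fun θ => mvec_Rmat_eq θ (q i))
  have hcomp : HasDerivAt (fun θ : ℝ => hessMap m sg lam (fun i => mvec (Rmat θ) (q i))) (H v) 0 := by
    have hH' : HasFDerivAt (fun p => hessMap m sg lam p) H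
        ((fun θ : ℝ => fun i => mvec (Rmat θ) (q i)) 0) := by show HasFDerivAt _ H (fun i => mvec (Rmat 0) (q i)); rw [hg0]; exact hH
    exact hH'.comp_hasDerivAt 0 hgd
  have hconst : (fun θ : ℝ => hessMap m sg lam (fun i => mvec (Rmat θ) (q i)))
      = fun _ => (0 : Fin n → E2) := by
    funext θ; funext i
    rw [hessMap_equivariant, hzero i, mvec_zero']; rfl
  rw [hconst] at hcomp
  have hHv : H v = 0 := hcomp.unique (hasDerivAt_const 0 0)
  refine ⟨hHv, ?_⟩
  -- rank bound
  have hvne : v ≠ 0 := by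
    intro h0
    have hq0 : ∀ i, q i = 0 := by
      intro i
      have := congrFun h0 i
      exact (rotJ_eq_zero_iff (q i)).mp this
    have : momI m q (Sdiag sg sg) = 0 := by
      unfold momI
      rw [hc]
      simp [hq0]
    rw [hI] at this
    exact one_ne_zero this
  have hker : 0 < Module.finrank ℝ (LinearMap.ker H.toLinearMap) := by
    have hmem : v ∈ LinearMap.ker H.toLinearMap := LinearMap.mem_ker.mpr hHv
    have hne : (⟨v, hmem⟩ : LinearMap.ker H.toLinearMap) ≠ 0 := by
      intro h; exact hvne (by simpa using congrArg Subtype.val h)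
    haveI : Nontrivial (LinearMap.ker H.toLinearMap) := nontrivial_of_ne _ 0 hne
    exact Module.finrank_pos
  have hdim : Module.finrank ℝ (Fin n → E2) = 2 * n := by
    rw [Module.finrank_pi_fintype]
    simp [finrank_euclideanSpace_fin, mul_comm]
  have hrn := LinearMap.finrank_range_add_finrank_ker H.toLinearMap
  rw [hdim] at hrn
  omega
end
end

section
/- Under the hypotheses of the analytic continuation (σ_x ≠ σ_y case), define f(m_{n+1}, q, q_{n+1}) ∈ ℝ^{2n+2} as the stacked vector of f_1^{(n+1)},...,f_{n+1}^{(n+1)} with λ = U_n(m, q_0) fixed. Then the Jacobian D_{(q, q_{n+1})} f(0, q_0, q_{0,n+1}) is block lower-triangular, with upper-left 2n×2n block equal to the Jacobian D_q f^{(n)}(m, q_0) of the n-body relative equilibrium map and lower-right 2×2 block equal to D²_{q_{n+1}} V_{Sn}(m, q_0, q_{0,n+1}); hence it is invertible whenever both blocks are invertible. -/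
open scoped BigOperators RealInnerProductSpace
open Matrix Filter

noncomputable section

/-- at `m_{n+1} = 0` the Jacobian of the combined `(n+1)`-body map is
block lower-triangular, with blocks the Jacobian of the `n`-body map and the Hessian
of the restricted potential; it is invertible when both blocks are. -/
theorem stmt17 {n : ℕ} (m : Fin n → ℝ) (hm : ∀ i, 0 < m i)
    (sx sy : ℝ) (hx : 0 < sx) (hy : 0 < sy) (hxy : sx ≠ sy)
    (q0 : Fin n → E2) (hq0 : CollisionFree q0)
    (q01 : E2) (hsep : ∀ i, q01 ≠ q0 i)
    (lam : ℝ) (hlam : lam = newtU m q0)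
    (A : (Fin n → E2) →L[ℝ] (Fin n → E2))
    (hA : HasFDerivAt (fun q => nBodyMap m (Sdiag sx sy) lam q) A q0)
    (B : E2 →L[ℝ] E2)
    (hB : HasFDerivAt (fun ξ => gradV m (Sdiag sx sy) lam q0 ξ) B q01)
    (L : ((Fin n → E2) × E2) →L[ℝ] ((Fin n → E2) × E2))
    (hL : HasFDerivAt
      (fun p : (Fin n → E2) × E2 => fullMap m (Sdiag sx sy) lam 0 p.1 p.2)
      L (q0, q01)) :
    (∀ (v : Fin n → E2) (w : E2), (L (v, w)).1 = A v) ∧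
      (∀ w : E2, (L ((0 : Fin n → E2), w)).2 = B w) ∧
      (Function.Bijective A → Function.Bijective B → Function.Bijective L) := by
  set S := Sdiag sx sy with hS
  have hfull : (fun p : (Fin n → E2) × E2 => fullMap m S lam 0 p.1 p.2)
      = fun p : (Fin n → E2) × E2 => (nBodyMap m S lam p.1, gradV m S lam p.1 p.2) := by
    funext p
    simp [fullMap, zero_div]
  rw [hfull] at hL
  -- first component
  have h1 : HasFDerivAt (fun p : (Fin n → E2) × E2 => nBodyMap m S lam p.1)
      ((ContinuousLinearMap.fst ℝ (Fin n → E2) E2).comp L) (q0, q01) := hL.fst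
  have h2 : HasFDerivAt (fun p : (Fin n → E2) × E2 => nBodyMap m S lam p.1)
      (A.comp (ContinuousLinearMap.fst ℝ (Fin n → E2) E2)) (q0, q01) :=
    by have hfst : HasFDerivAt (Prod.fst : (Fin n → E2) × E2 → Fin n → E2)
        (ContinuousLinearMap.fst ℝ (Fin n → E2) E2) (q0, q01) := hasFDerivAt_fst
       exact hA.comp (q0, q01) hfst
  have hAeq := h1.unique h2
  have claim1 : ∀ (v : Fin n → E2) (w : E2), (L (v, w)).1 = A v := by
    intro v w
    have := congrFun (congrArg (fun (T : ((Fin n → E2) × E2) →L[ℝ] (Fin n → E2)) =>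
      (T : ((Fin n → E2) × E2) → (Fin n → E2))) hAeq) (v, w)
    simpa using this
  -- second component
  have hι : HasFDerivAt (fun ξ : E2 => ((q0, ξ) : (Fin n → E2) × E2))
      ((0 : E2 →L[ℝ] (Fin n → E2)).prod (ContinuousLinearMap.id ℝ E2)) q01 :=
    HasFDerivAt.prodMk (hasFDerivAt_const q0 q01) (hasFDerivAt_id q01)
  have h3 : HasFDerivAt (fun ξ : E2 => gradV m S lam q0 ξ)
      ((ContinuousLinearMap.snd ℝ (Fin n → E2) E2).comp
        (L.comp ((0 : E2 →L[ℝ] (Fin n → E2)).prod (ContinuousLinearMap.id ℝ E2)))) q01 :=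
    (hL.comp q01 hι).snd
  have hBeq := h3.unique hB
  have claim2 : ∀ w : E2, (L ((0 : Fin n → E2), w)).2 = B w := by
    intro w
    have := congrFun (congrArg (fun (T : E2 →L[ℝ] E2) => (T : E2 → E2)) hBeq) w
    simpa using this
  refine ⟨claim1, claim2, ?_⟩
  intro hAb hBb
  have hsplit : ∀ (v : Fin n → E2) (w : E2), L (v, w) = L (v, 0) + L (0, w) := by
    intro v w
    rw [← L.map_add]
    norm_num
  constructor
  · intro p p' hpp
    obtain ⟨v, w⟩ := p; obtain ⟨v', w'⟩ := p'
    have h1' : A v = A v' := by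
      have := congrArg Prod.fst hpp
      rwa [claim1, claim1] at this
    have hv : v = v' := hAb.1 h1'
    subst hv
    have h2' : (L (v, w)).2 = (L (v, w')).2 := congrArg Prod.snd hpp
    rw [hsplit v w, hsplit v w'] at h2'
    have : B w = B w' := by
      have h := h2'
      simp only [Prod.snd_add, claim2] at h
      exact add_left_cancel h
    have hw : w = w' := hBb.1 this
    rw [hw]
  · intro p
    obtain ⟨a, b⟩ := p
    obtain ⟨v, hv⟩ := hAb.2 a
    obtain ⟨w, hw⟩ := hBb.2 (b - (L (v, 0)).2)
    refine ⟨(v, w), ?_⟩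
    have hfst : (L (v, w)).1 = a := by rw [claim1, hv]
    have hsnd : (L (v, w)).2 = b := by
      rw [hsplit v w]
      simp only [Prod.snd_add, claim2, hw]
      abel
    exact Prod.ext hfst hsnd
end
end
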